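/- Let D be a nonempty convex open set in ℝ^d and let w : [0,∞) → ℝ^d be right-continuous with left limits with w(0) ∈ D̄. If (X, φ) and (X̃, φ̃) are both solutions of the Skorohod equation X = w + φ, then X(t) = X̃(t) and φ(t) = φ̃(t) for all t ≥ 0. -/

import Mathlib

open MeasureTheory Set Filter Topology
open scoped RealInnerProductSpace

noncomputable section

abbrev Euc (d : ℕ) := EuclideanSpace ℝ (Fin d)

/-- Measure data representing the Lebesgue–Stieltjes measures `dφ` (componentwise, as a
difference of locally finite nonnegative measures) and `d|φ|` (the total variation measure)
of a function `φ : [0,∞) → ℝ^d` of locally bounded variation. -/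
structure BVMeasureData (d : ℕ) (φ : ℝ → Euc d) where
  pos : Fin d → Measure ℝ
  neg : Fin d → Measure ℝ
  var : Measure ℝ
  pos_fin : ∀ i : Fin d, ∀ t : ℝ, pos i (Icc 0 t) < ⊤
  neg_fin : ∀ i : Fin d, ∀ t : ℝ, neg i (Icc 0 t) < ⊤
  increments : ∀ i : Fin d, ∀ s t : ℝ, 0 ≤ s → s ≤ t →
    (pos i (Ioc s t)).toReal - (neg i (Ioc s t)).toReal = φ t i - φ s i
  var_eq : ∀ s t : ℝ, 0 ≤ s → s ≤ t → var (Ioc s t) = eVariationOn φ (Icc s t)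

/-- The Stieltjes integral `∫_{(s,t]} ⟨f(τ), dφ(τ)⟩`. -/
def BVMeasureData.pairing {d : ℕ} {φ : ℝ → Euc d} (M : BVMeasureData d φ)
    (f : ℝ → Euc d) (s t : ℝ) : ℝ :=
  ∑ i : Fin d, ((∫ τ in Ioc s t, f τ i ∂(M.pos i)) - ∫ τ in Ioc s t, f τ i ∂(M.neg i))

/-- `f` is right-continuous at every `t ≥ 0`. -/
def RightContinuousOnNonneg {E : Type*} [TopologicalSpace E] (f : ℝ → E) : Prop :=
  ∀ t : ℝ, 0 ≤ t → ContinuousWithinAt f (Ici t) t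

/-- `f` has left limits at every `t > 0`. -/
def HasLeftLimitsOnPos {E : Type*} [TopologicalSpace E] (f : ℝ → E) : Prop :=
  ∀ t : ℝ, 0 < t → ∃ L, Tendsto f (𝓝[<] t) (𝓝 L)

/-- `φ` is associated with `X` (relative to the convex domain `D`):
`φ` is rcll of locally bounded variation with `φ(0) = 0`, the measure `d|φ|` does not
charge `{t ≥ 0 : X(t) ∈ D}`, and `∫_{(s,t]} ⟨η(τ) − X(τ), dφ(τ)⟩ ≥ 0` for every
continuous `η : [0,∞) → closure D`. -/
structure IsAssociated {d : ℕ} (D : Set (Euc d)) (X : ℝ → Euc d) (φ : ℝ → Euc d)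
    (M : BVMeasureData d φ) : Prop where
  rightCont : RightContinuousOnNonneg φ
  leftLim : HasLeftLimitsOnPos φ
  bv : ∀ t : ℝ, 0 ≤ t → eVariationOn φ (Icc 0 t) < ⊤
  init : φ 0 = 0
  carried : M.var {t : ℝ | 0 ≤ t ∧ X t ∈ D} = 0
  normal : ∀ η : ℝ → Euc d, Continuous η → (∀ t : ℝ, 0 ≤ t → η t ∈ closure D) →
    ∀ s t : ℝ, 0 ≤ s → s ≤ t → 0 ≤ M.pairing (fun τ => η τ - X τ) s t

/-- `(X, φ)` (with measure data `M` for `φ`) solves the Skorohod equation `X = w + φ`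
for the domain `D`. -/
structure IsSkorohodSolution {d : ℕ} (D : Set (Euc d)) (w X φ : ℝ → Euc d)
    (M : BVMeasureData d φ) : Prop where
  rightCont : RightContinuousOnNonneg X
  leftLim : HasLeftLimitsOnPos X
  mem : ∀ t : ℝ, 0 ≤ t → X t ∈ closure D
  eqn : ∀ t : ℝ, 0 ≤ t → X t = w t + φ t
  assoc : IsAssociated D X φ M


lemma abs_coord_le {d : ℕ} (x : Euc d) (i : Fin d) : |x i| ≤ ‖x‖ := by
  rw [EuclideanSpace.norm_eq]
  calc |x i| = √(‖x i‖^2) := by rw [Real.sqrt_sq_eq_abs, Real.norm_eq_abs, abs_abs]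
    _ ≤ √(∑ j, ‖x j‖^2) := Real.sqrt_le_sqrt
        (Finset.single_le_sum (fun j _ => sq_nonneg ‖x j‖) (Finset.mem_univ i))

private lemma norm_le_of_dist {E : Type*} [NormedAddCommGroup E] {a b : E}
    (h : dist a b < 1) : ‖a‖ ≤ ‖b‖ + 1 := by
  rw [dist_eq_norm] at h
  have := norm_sub_norm_le a b
  linarith

lemma exists_bound_rcll {E : Type*} [NormedAddCommGroup E] {f : ℝ → E}
    (hrc : RightContinuousOnNonneg f) (hll : HasLeftLimitsOnPos f) (T : ℝ) :
    ∃ C : ℝ, ∀ τ ∈ Icc (0:ℝ) T, ‖f τ‖ ≤ C := by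
  by_cases hT : 0 ≤ T
  · have key : ∀ x ∈ Icc (0:ℝ) T, ∃ W : Set ℝ, W ∈ 𝓝 x ∧ ∃ C : ℝ,
        ∀ u ∈ W ∩ Icc (0:ℝ) T, ‖f u‖ ≤ C := by
      intro x hx
      have h1 : ∀ᶠ u in 𝓝[Ici x] x, dist (f u) (f x) < 1 :=
        Metric.tendsto_nhds.mp (hrc x hx.1) 1 one_pos
      obtain ⟨U, hUo, hxU, hU⟩ := mem_nhdsWithin.mp h1
      by_cases hx0 : 0 < x
      · obtain ⟨L, hL⟩ := hll x hx0
        have h2 : ∀ᶠ u in 𝓝[<] x, dist (f u) L < 1 :=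
          Metric.tendsto_nhds.mp hL 1 one_pos
        obtain ⟨V, hVo, hxV, hV⟩ := mem_nhdsWithin.mp h2
        refine ⟨U ∩ V, (hUo.inter hVo).mem_nhds ⟨hxU, hxV⟩,
          max (‖f x‖ + 1) (‖L‖ + 1), ?_⟩
        rintro u ⟨⟨hu1, hu2⟩, -⟩
        rcases le_or_gt x u with h | h
        · exact le_trans (norm_le_of_dist (hU ⟨hu1, h⟩)) (le_max_left _ _)
        · exact le_trans (norm_le_of_dist (hV ⟨hu2, h⟩)) (le_max_right _ _)
      · have hx0' : x = 0 := le_antisymm (not_lt.1 hx0) hx.1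
        refine ⟨U, hUo.mem_nhds hxU, ‖f x‖ + 1, ?_⟩
        rintro u ⟨hu1, hu0, -⟩
        exact norm_le_of_dist (hU ⟨hu1, hx0' ▸ hu0⟩)
    choose! W hW C hC using key
    obtain ⟨tf, htf1, htf2⟩ :=
      (isCompact_Icc : IsCompact (Icc (0:ℝ) T)).elim_nhds_subcover W (fun x hx => hW x hx)
    refine ⟨∑ x ∈ tf, max (C x) 0, fun τ hτ => ?_⟩
    obtain ⟨x, hxtf, hτW⟩ : ∃ x ∈ tf, τ ∈ W x := by
      simpa using htf2 hτ
    calc ‖f τ‖ ≤ C x := hC x (htf1 x hxtf) τ ⟨hτW, hτ⟩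
      _ ≤ max (C x) 0 := le_max_left _ _
      _ ≤ ∑ y ∈ tf, max (C y) 0 :=
          Finset.single_le_sum (fun y _ => le_max_right (C y) 0) hxtf
  · exact ⟨0, fun τ hτ => absurd (hτ.1.trans hτ.2) hT⟩

lemma measurable_comp_countable_range {E : Type*} [MeasurableSpace E] {m : ℝ → ℝ}
    (hm : Measurable m) (hc : (Set.range m).Countable) (f : ℝ → E) :
    Measurable (f ∘ m) := by
  intro S _
  have heq : (f ∘ m) ⁻¹' S = m ⁻¹' (f ⁻¹' S ∩ Set.range m) := by
    ext u
    constructor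
    · intro h; exact ⟨h, ⟨u, rfl⟩⟩
    · intro h; exact h.1
  rw [heq]
  exact hm ((hc.mono inter_subset_right).measurableSet)

/-- dyadic right-endpoint step map on `(s,t]` -/
def mstep (s t : ℝ) (n : ℕ) (τ : ℝ) : ℝ :=
  s + (⌈(τ - s) / ((t - s) / 2 ^ n)⌉ : ℤ) * ((t - s) / 2 ^ n)

section mstep
variable {s t : ℝ} (n : ℕ)

lemma hstep_pos (hst : s < t) : 0 < (t - s) / 2 ^ n := div_pos (sub_pos.2 hst) (by positivity)

lemma mstep_monotone (hst : s < t) : Monotone (mstep s t n) := by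
  intro a b hab
  have h := hstep_pos n hst
  unfold mstep
  have : ⌈(a - s) / ((t - s) / 2 ^ n)⌉ ≤ ⌈(b - s) / ((t - s) / 2 ^ n)⌉ :=
    Int.ceil_le_ceil (by gcongr)
  have : ((⌈(a - s) / ((t - s) / 2 ^ n)⌉ : ℤ) : ℝ) ≤ (⌈(b - s) / ((t - s) / 2 ^ n)⌉ : ℤ) :=
    Int.cast_le.2 this
  nlinarith

lemma mstep_range_countable : (Set.range (mstep s t n)).Countable := by
  have : Set.range (mstep s t n) ⊆ Set.range (fun k : ℤ => s + (k : ℝ) * ((t - s) / 2 ^ n)) := by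
    rintro x ⟨τ, rfl⟩
    exact ⟨⌈(τ - s) / ((t - s) / 2 ^ n)⌉, rfl⟩
  exact (Set.countable_range _).mono this

lemma mstep_facts (hst : s < t) {τ : ℝ} (hτ : τ ∈ Ioc s t) :
    mstep s t n τ ∈ Ioc s t ∧ τ ≤ mstep s t n τ ∧ mstep s t n τ < τ + (t - s) / 2 ^ n := by
  set h := (t - s) / 2 ^ n with hh
  have hp : 0 < h := hstep_pos n hst
  set x := (τ - s) / h with hx
  have hx0 : 0 < x := div_pos (sub_pos.2 hτ.1) hp
  have hxt : x ≤ 2 ^ n := by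
    rw [hx, div_le_iff₀ hp]
    have h2 : (2:ℝ) ^ n * h = t - s := by rw [hh]; field_simp
    linarith [hτ.2]
  have hceil1 : (1:ℤ) ≤ ⌈x⌉ := by have := Int.ceil_pos.2 hx0; omega
  have hceil2 : (⌈x⌉ : ℝ) ≤ 2 ^ n := by
    have : ⌈x⌉ ≤ (2 ^ n : ℤ) := Int.ceil_le.2 (by push_cast; exact hxt)
    calc (⌈x⌉:ℝ) ≤ ((2^n : ℤ) : ℝ) := Int.cast_le.2 this
      _ = 2 ^ n := by push_cast; ring
  have hle : x ≤ (⌈x⌉ : ℝ) := Int.le_ceil x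
  have hlt : (⌈x⌉ : ℝ) < x + 1 := Int.ceil_lt_add_one x
  have hxh : x * h = τ - s := div_mul_cancel₀ _ hp.ne'
  have h1 : τ ≤ mstep s t n τ := by
    unfold mstep; rw [← hh, ← hx]; nlinarith
  have h2 : mstep s t n τ ≤ t := by
    unfold mstep; rw [← hh, ← hx]
    have : (⌈x⌉ : ℝ) * h ≤ 2 ^ n * h := by nlinarith
    have h2n : (2:ℝ) ^ n * h = t - s := by rw [hh]; field_simp
    linarith
  have h3 : mstep s t n τ < τ + h := by
    unfold mstep; rw [← hh, ← hx]; nlinarith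
  have h0 : s < mstep s t n τ := lt_of_lt_of_le hτ.1 h1
  exact ⟨⟨h0, h2⟩, h1, h3⟩

lemma mstep_tendsto (hst : s < t) {τ : ℝ} (hτ : τ ∈ Ioc s t) :
    Tendsto (fun n => mstep s t n τ) atTop (𝓝[Ici τ] τ) := by
  have hh : Tendsto (fun n : ℕ => (t - s) / 2 ^ n) atTop (𝓝 0) := by
    have : (fun n : ℕ => (t - s) / 2 ^ n) = fun n : ℕ => (t - s) * (1/2 : ℝ) ^ n := by
      funext n; rw [div_pow, one_pow]; ring
    rw [this]
    have hpow : Tendsto (fun n : ℕ => (1/2 : ℝ) ^ n) atTop (𝓝 0) :=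
      tendsto_pow_atTop_nhds_zero_of_lt_one (by norm_num) (by norm_num)
    simpa using hpow.const_mul (t - s)
  have hup : Tendsto (fun n : ℕ => τ + (t - s) / 2 ^ n) atTop (𝓝 τ) := by
    simpa using tendsto_const_nhds.add hh
  have hm : Tendsto (fun n => mstep s t n τ) atTop (𝓝 τ) :=
    tendsto_of_tendsto_of_tendsto_of_le_of_le tendsto_const_nhds hup
      (fun n => (mstep_facts n hst hτ).2.1) (fun n => (mstep_facts n hst hτ).2.2.le)
  exact tendsto_nhdsWithin_of_tendsto_nhds_of_eventually_within _ hm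
    (Eventually.of_forall fun n => (mstep_facts n hst hτ).2.1)

lemma mstep_const (hst : s < t) {k : ℕ} {τ : ℝ}
    (hτ : τ ∈ Ioc (s + k * ((t - s) / 2 ^ n)) (s + (k + 1) * ((t - s) / 2 ^ n))) :
    mstep s t n τ = s + ((k : ℝ) + 1) * ((t - s) / 2 ^ n) := by
  set h := (t - s) / 2 ^ n with hh
  have hp : 0 < h := hstep_pos n hst
  have hceil : ⌈(τ - s) / h⌉ = (k : ℤ) + 1 := by
    rw [Int.ceil_eq_iff]
    constructor
    · push_cast
      rw [lt_div_iff₀ hp]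
      have := hτ.1
      nlinarith
    · push_cast
      rw [div_le_iff₀ hp]
      have := hτ.2
      nlinarith
  unfold mstep
  rw [← hh, hceil]
  push_cast
  ring

end mstep

lemma rcll_tendsto_mstep {d : ℕ} {f : ℝ → Euc d} (hrc : RightContinuousOnNonneg f)
    {s t : ℝ} (hs : 0 ≤ s) (hst : s < t) {τ : ℝ} (hτ : τ ∈ Ioc s t) :
    Tendsto (fun n => f (mstep s t n τ)) atTop (𝓝 (f τ)) :=
  (hrc τ (hs.trans hτ.1.le)).tendsto.comp (mstep_tendsto hst hτ)

lemma rcll_aemeasurable {d : ℕ} {f : ℝ → Euc d} (hrc : RightContinuousOnNonneg f)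
    {s t : ℝ} (hs : 0 ≤ s) (μ : Measure ℝ) :
    AEMeasurable f (μ.restrict (Ioc s t)) := by
  rcases le_or_gt t s with h | h
  · rw [Ioc_eq_empty (not_lt.2 h), Measure.restrict_empty]
    exact aemeasurable_zero_measure
  · refine aemeasurable_of_tendsto_metrizable_ae atTop
      (f := fun n τ => f (mstep s t n τ)) (fun n => ?_) ?_
    · exact (measurable_comp_countable_range ((mstep_monotone n h).measurable)
        (mstep_range_countable n) f).aemeasurable
    · exact ((ae_restrict_iff' measurableSet_Ioc).2
        (ae_of_all _ fun τ hτ => rcll_tendsto_mstep hrc hs h hτ))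

section Energy

variable (p q ρ σ : Measure ℝ)

lemma meas_Iic_fun : Measurable fun u => σ (Iic u) :=
  Monotone.measurable (fun a b hab => measure_mono (Iic_subset_Iic.2 hab))

lemma meas_Iio_fun : Measurable fun u => σ (Iio u) :=
  Monotone.measurable (fun a b hab => measure_mono (Iio_subset_Iio hab))

variable [IsFiniteMeasure p] [IsFiniteMeasure q] [IsFiniteMeasure ρ] [IsFiniteMeasure σ]

lemma meas_singleton_fun : Measurable fun u => σ {u} := by
  have : (fun u => σ {u}) = fun u => σ (Iic u) - σ (Iio u) := by
    funext u
    have h1 : Iic u \ Iio u = {u} := by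
      ext v; simp [le_antisymm_iff, and_comm]
    rw [← h1, measure_diff Iio_subset_Iic_self measurableSet_Iio.nullMeasurableSet
      (measure_ne_top σ _)]
  rw [this]
  exact (meas_Iic_fun σ).sub (meas_Iio_fun σ)

lemma integrable_of_bdd_meas {f : ℝ → ℝ} (hf : Measurable f) {C : ℝ}
    (hC : ∀ x, |f x| ≤ C) : Integrable f ρ :=
  Integrable.mono' (integrable_const C) hf.aestronglyMeasurable
    (ae_of_all _ fun x => by simpa [Real.norm_eq_abs] using hC x)

/-- Fubini identity for distribution functions. -/
lemma fubini_K :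
    (∫ u, (σ (Iic u)).toReal ∂ρ) + (∫ v, (ρ (Iio v)).toReal ∂σ)
      = (ρ univ).toReal * (σ univ).toReal := by
  set S : Set (ℝ × ℝ) := {z | z.2 ≤ z.1} with hSdef
  have hS : MeasurableSet S := (isClosed_le continuous_snd continuous_fst).measurableSet
  have h1 : (ρ.prod σ) S = ∫⁻ u, σ (Iic u) ∂ρ := by
    rw [Measure.prod_apply hS]
    rfl
  have hT : MeasurableSet {z : ℝ × ℝ | z.2 < z.1} :=
    (isOpen_lt continuous_snd continuous_fst).measurableSet
  have h2 : (ρ.prod σ) Sᶜ = ∫⁻ v, ρ (Iio v) ∂σ := by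
    have hswap : Sᶜ = Prod.swap ⁻¹' {z : ℝ × ℝ | z.2 < z.1} := by
      ext z; simp [hSdef, not_le]
    rw [hswap, ← Measure.map_apply measurable_swap hT, Measure.prod_swap,
      Measure.prod_apply hT]
    rfl
  have h3 : (ρ.prod σ) S + (ρ.prod σ) Sᶜ = ρ univ * σ univ := by
    rw [measure_add_measure_compl hS, ← Set.univ_prod_univ, Measure.prod_prod]
  have hfin1 : ∫⁻ u, σ (Iic u) ∂ρ ≠ ⊤ := by
    have : ∫⁻ u, σ (Iic u) ∂ρ ≤ ∫⁻ _, σ univ ∂ρ :=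
      lintegral_mono fun u => measure_mono (subset_univ _)
    rw [lintegral_const] at this
    exact (this.trans_lt (ENNReal.mul_lt_top (measure_lt_top _ _) (measure_lt_top _ _))).ne
  have hfin2 : ∫⁻ v, ρ (Iio v) ∂σ ≠ ⊤ := by
    have : ∫⁻ v, ρ (Iio v) ∂σ ≤ ∫⁻ _, ρ univ ∂σ :=
      lintegral_mono fun u => measure_mono (subset_univ _)
    rw [lintegral_const] at this
    exact (this.trans_lt (ENNReal.mul_lt_top (measure_lt_top _ _) (measure_lt_top _ _))).ne
  have e1 : ∫ u, (σ (Iic u)).toReal ∂ρ = (∫⁻ u, σ (Iic u) ∂ρ).toReal :=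
    integral_toReal (meas_Iic_fun σ).aemeasurable (ae_of_all _ fun u => measure_lt_top _ _)
  have e2 : ∫ v, (ρ (Iio v)).toReal ∂σ = (∫⁻ v, ρ (Iio v) ∂σ).toReal :=
    integral_toReal (meas_Iio_fun ρ).aemeasurable (ae_of_all _ fun u => measure_lt_top _ _)
  rw [e1, e2, ← h1, ← h2, ← ENNReal.toReal_add (h1 ▸ hfin1) (h2 ▸ hfin2), h3,
    ENNReal.toReal_mul]

/-- Fubini identity for the diagonal. -/
lemma fubini_diag :
    ∫ u, (σ {u}).toReal ∂ρ = ∫ v, (ρ {v}).toReal ∂σ := by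
  set S : Set (ℝ × ℝ) := {z | z.1 = z.2} with hSdef
  have hS : MeasurableSet S := (isClosed_eq continuous_fst continuous_snd).measurableSet
  have h1 : (ρ.prod σ) S = ∫⁻ u, σ {u} ∂ρ := by
    rw [Measure.prod_apply hS]
    congr 1; funext u
    congr 1; ext v; simp [hSdef, eq_comm]
  have h2 : (ρ.prod σ) S = ∫⁻ v, ρ {v} ∂σ := by
    have hswap : S = Prod.swap ⁻¹' S := by ext z; simp [hSdef, eq_comm]
    rw [hswap, ← Measure.map_apply measurable_swap hS, Measure.prod_swap,
      Measure.prod_apply hS]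
    congr 1; funext v
    congr 1; ext u; simp [hSdef]
  have e1 : ∫ u, (σ {u}).toReal ∂ρ = ((ρ.prod σ) S).toReal := by
    rw [h1]
    exact integral_toReal (meas_singleton_fun σ).aemeasurable
      (ae_of_all _ fun u => measure_lt_top _ _)
  have e2 : ∫ v, (ρ {v}).toReal ∂σ = ((ρ.prod σ) S).toReal := by
    rw [h2]
    exact integral_toReal (meas_singleton_fun ρ).aemeasurable
      (ae_of_all _ fun u => measure_lt_top _ _)
  rw [e1, e2]

end Energy

section Energy2

variable (p q : Measure ℝ) [IsFiniteMeasure p] [IsFiniteMeasure q]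

lemma toReal_singleton_le (v : ℝ) : (p {v}).toReal ≤ (p univ).toReal :=
  ENNReal.toReal_mono (measure_ne_top _ _) (measure_mono (subset_univ _))

lemma atom_nonneg :
    0 ≤ (∫ v, ((p {v}).toReal - (q {v}).toReal) ∂p)
      - ∫ v, ((p {v}).toReal - (q {v}).toReal) ∂q := by
  set f : ℝ → ℝ := fun v => (p {v}).toReal - (q {v}).toReal with hf
  have hfm : Measurable f := (meas_singleton_fun p).ennreal_toReal.sub
    (meas_singleton_fun q).ennreal_toReal
  set C : ℝ := (p univ).toReal + (q univ).toReal with hC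
  have hfb : ∀ v, |f v| ≤ C := by
    intro v
    have h1 := toReal_singleton_le p v
    have h2 := toReal_singleton_le q v
    have h3 : (0:ℝ) ≤ (p {v}).toReal := ENNReal.toReal_nonneg
    have h4 : (0:ℝ) ≤ (q {v}).toReal := ENNReal.toReal_nonneg
    rw [abs_le]; constructor <;> simp only [hf, hC] <;> nlinarith
  have hintp : Integrable f p := integrable_of_bdd_meas p hfm hfb
  have hintq : Integrable f q := integrable_of_bdd_meas q hfm hfb
  set A : Set ℝ := {v | 0 < p {v}} ∪ {v | 0 < q {v}} with hA
  have hcount : A.Countable := by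
    refine Set.Countable.union ?_ ?_ <;>
    exact Measure.countable_meas_pos_of_disjoint_iUnion
      (fun v : ℝ => measurableSet_singleton v)
      (fun a b hab => Set.disjoint_singleton.2 hab)
  have hAm : MeasurableSet A := hcount.measurableSet
  have hf0 : ∀ v ∉ A, f v = 0 := by
    intro v hv
    simp only [hA, mem_union, mem_setOf_eq, not_or, not_lt, le_zero_iff] at hv
    simp [hf, hv.1, hv.2]
  have hsplit : ∀ (ρ : Measure ℝ) [IsFiniteMeasure ρ], Integrable f ρ →
      ∫ v, f v ∂ρ = ∫ v in A, f v ∂ρ := by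
    intro ρ _ hint
    rw [← integral_add_compl hAm hint]
    have : ∫ v in Aᶜ, f v ∂ρ = ∫ v in Aᶜ, (0:ℝ) ∂ρ :=
      setIntegral_congr_fun hAm.compl (fun v hv => hf0 v hv)
    rw [this]; simp
  -- summability of singleton masses over A
  have hsum : ∀ (ρ : Measure ℝ) [IsFiniteMeasure ρ], Summable (fun a : A => (ρ {(a:ℝ)}).toReal) := by
    intro ρ _
    apply ENNReal.summable_toReal
    have hb : ρ (⋃ v ∈ A, {v}) = ∑' (a : A), ρ {(a:ℝ)} :=
      measure_biUnion hcount (fun a _ b _ hab => Set.disjoint_singleton.2 hab)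
        (fun v _ => measurableSet_singleton v)
    rw [Set.biUnion_of_singleton] at hb
    rw [← hb]
    exact (measure_lt_top _ _).ne
  have hsmul : ∀ (ρ : Measure ℝ) [IsFiniteMeasure ρ],
      Summable (fun a : A => (ρ {(a:ℝ)}).toReal * f a) := by
    intro ρ _
    apply Summable.of_abs
    refine Summable.of_nonneg_of_le (fun a => abs_nonneg _) (fun a => ?_) ((hsum ρ).mul_right C)
    rw [abs_mul, abs_of_nonneg ENNReal.toReal_nonneg]
    exact mul_le_mul_of_nonneg_left (hfb a) ENNReal.toReal_nonneg
  have hp' : ∫ v, f v ∂p = ∑' (a : A), (p {(a:ℝ)}).toReal * f a := by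
    rw [hsplit p hintp, setIntegral_countable f hcount hintp.integrableOn]
    simp [smul_eq_mul, Measure.real]
  have hq' : ∫ v, f v ∂q = ∑' (a : A), (q {(a:ℝ)}).toReal * f a := by
    rw [hsplit q hintq, setIntegral_countable f hcount hintq.integrableOn]
    simp [smul_eq_mul, Measure.real]
  rw [hp', hq', ← Summable.tsum_sub (hsmul p) (hsmul q)]
  have : ∀ a : A, (p {(a:ℝ)}).toReal * f a - (q {(a:ℝ)}).toReal * f a = f a ^ 2 := by
    intro a; simp only [hf]; ring
  rw [tsum_congr this]
  exact tsum_nonneg (fun a => sq_nonneg _)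

lemma energy_ineq :
    ((p univ).toReal - (q univ).toReal) ^ 2 ≤
      2 * ((∫ v, ((p (Iic v)).toReal - (q (Iic v)).toReal) ∂p)
         - ∫ v, ((p (Iic v)).toReal - (q (Iic v)).toReal) ∂q) := by
  have hPm : Measurable fun v => (p (Iic v)).toReal := (meas_Iic_fun p).ennreal_toReal
  have hQm : Measurable fun v => (q (Iic v)).toReal := (meas_Iic_fun q).ennreal_toReal
  have hpam : Measurable fun v => (p {v}).toReal := (meas_singleton_fun p).ennreal_toReal
  have hqam : Measurable fun v => (q {v}).toReal := (meas_singleton_fun q).ennreal_toReal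
  have hPb : ∀ v, |(p (Iic v)).toReal| ≤ (p univ).toReal := fun v => by
    rw [abs_of_nonneg ENNReal.toReal_nonneg]
    exact ENNReal.toReal_mono (measure_ne_top _ _) (measure_mono (subset_univ _))
  have hQb : ∀ v, |(q (Iic v)).toReal| ≤ (q univ).toReal := fun v => by
    rw [abs_of_nonneg ENNReal.toReal_nonneg]
    exact ENNReal.toReal_mono (measure_ne_top _ _) (measure_mono (subset_univ _))
  have hpab : ∀ v, |(p {v}).toReal| ≤ (p univ).toReal := fun v => by
    rw [abs_of_nonneg ENNReal.toReal_nonneg]; exact toReal_singleton_le p v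
  have hqab : ∀ v, |(q {v}).toReal| ≤ (q univ).toReal := fun v => by
    rw [abs_of_nonneg ENNReal.toReal_nonneg]; exact toReal_singleton_le q v
  -- integrability of everything wrt both measures
  have iPp := integrable_of_bdd_meas p hPm hPb
  have iPq := integrable_of_bdd_meas q hPm hPb
  have iQp := integrable_of_bdd_meas p hQm hQb
  have iQq := integrable_of_bdd_meas q hQm hQb
  have ipap := integrable_of_bdd_meas p hpam hpab
  have ipaq := integrable_of_bdd_meas q hpam hpab
  have iqap := integrable_of_bdd_meas p hqam hqab
  have iqaq := integrable_of_bdd_meas q hqam hqab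
  -- pointwise Iio = Iic - singleton
  have hsplit : ∀ (ρ : Measure ℝ) [IsFiniteMeasure ρ], ∀ v : ℝ,
      (ρ (Iio v)).toReal = (ρ (Iic v)).toReal - (ρ {v}).toReal := by
    intro ρ _ v
    have : ρ (Iic v) = ρ (Iio v) + ρ {v} := by
      rw [← Iio_union_right, measure_union (by simp) (measurableSet_singleton v)]
    rw [this, ENNReal.toReal_add (measure_ne_top _ _) (measure_ne_top _ _)]
    ring
  have eIio : ∀ (ρ σ : Measure ℝ) [IsFiniteMeasure ρ] [IsFiniteMeasure σ],
      Integrable (fun v => (ρ (Iic v)).toReal) σ → Integrable (fun v => (ρ {v}).toReal) σ →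
      ∫ v, (ρ (Iio v)).toReal ∂σ
        = (∫ v, (ρ (Iic v)).toReal ∂σ) - ∫ v, (ρ {v}).toReal ∂σ := by
    intro ρ σ _ _ h1 h2
    rw [← integral_sub h1 h2]
    exact integral_congr_ae (ae_of_all _ fun v => hsplit ρ v)
  have h_pp := fubini_K p p
  have h_pq := fubini_K p q
  have h_qp := fubini_K q p
  have h_qq := fubini_K q q
  rw [eIio p p iPp ipap] at h_pp
  rw [eIio p q iPq ipaq] at h_pq
  rw [eIio q p iQp iqap] at h_qp
  rw [eIio q q iQq iqaq] at h_qq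
  have h_d := fubini_diag p q
  have h_R := atom_nonneg p q
  rw [integral_sub ipap iqap, integral_sub ipaq iqaq] at h_R
  rw [integral_sub iPp iQp, integral_sub iPq iQq]
  nlinarith [h_pp, h_pq, h_qp, h_qq, h_d, h_R]

end Energy2

lemma restrict_Ioc_finite (μ : Measure ℝ) {s t : ℝ} (hs : 0 ≤ s) (hfin : μ (Icc 0 t) < ⊤) :
    IsFiniteMeasure (μ.restrict (Ioc s t)) := by
  constructor
  rw [Measure.restrict_apply_univ]
  refine lt_of_le_of_lt (measure_mono fun x hx => ?_) hfin
  rcases mem_Ioc.1 hx with ⟨h1, h2⟩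
  exact mem_Icc.2 ⟨hs.trans h1.le, h2⟩

lemma integral_Ioc_partition (f : ℝ → ℝ) (μ : Measure ℝ) (a : ℕ → ℝ) (ha : Monotone a) :
    ∀ N : ℕ, IntegrableOn f (Ioc (a 0) (a N)) μ →
      ∫ τ in Ioc (a 0) (a N), f τ ∂μ
        = ∑ k ∈ Finset.range N, ∫ τ in Ioc (a k) (a (k+1)), f τ ∂μ := by
  intro N
  induction N with
  | zero => simp
  | succ N ih =>
    intro hint
    have hu : Ioc (a 0) (a N) ∪ Ioc (a N) (a (N+1)) = Ioc (a 0) (a (N+1)) :=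
      Ioc_union_Ioc_eq_Ioc (ha (Nat.zero_le N)) (ha (Nat.le_succ N))
    have hsub1 : Ioc (a 0) (a N) ⊆ Ioc (a 0) (a (N+1)) :=
      Ioc_subset_Ioc_right (ha (Nat.le_succ N))
    have hsub2 : Ioc (a N) (a (N+1)) ⊆ Ioc (a 0) (a (N+1)) :=
      Ioc_subset_Ioc_left (ha (Nat.zero_le N))
    have hdisj : Disjoint (Ioc (a 0) (a N)) (Ioc (a N) (a (N+1))) := by
      rw [Set.disjoint_left]
      rintro x ⟨_, h1⟩ ⟨h2, _⟩
      exact absurd h1 (not_le.2 h2)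
    rw [← hu, setIntegral_union hdisj measurableSet_Ioc
      (hint.mono_set hsub1) (hint.mono_set hsub2),
      ih (hint.mono_set hsub1), Finset.sum_range_succ]

lemma pairing_nonneg {d : ℕ} {D : Set (Euc d)} {X φ : ℝ → Euc d} {M : BVMeasureData d φ}
    (hA : IsAssociated D X φ M)
    (hXrc : RightContinuousOnNonneg X) (hXll : HasLeftLimitsOnPos X)
    {Z : ℝ → Euc d} (hZrc : RightContinuousOnNonneg Z) (hZll : HasLeftLimitsOnPos Z)
    (hZmem : ∀ u : ℝ, 0 ≤ u → Z u ∈ closure D)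
    {s t : ℝ} (hs : 0 ≤ s) (hst : s ≤ t) :
    0 ≤ M.pairing (fun τ => Z τ - X τ) s t := by
  rcases eq_or_lt_of_le hst with rfl | hlt
  · simp [BVMeasureData.pairing]
  obtain ⟨CZ, hCZ⟩ := exists_bound_rcll hZrc hZll t
  obtain ⟨CX, hCX⟩ := exists_bound_rcll hXrc hXll t
  set g : ℕ → ℝ → Euc d := fun n τ => Z (mstep s t n τ) with hg
  have hgmeas : ∀ n, Measurable (g n) := fun n =>
    measurable_comp_countable_range ((mstep_monotone n hlt).measurable)
      (mstep_range_countable n) Z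
  -- generic integrability and convergence for a component/measure pair
  have hgen : ∀ (i : Fin d) (ρ : Measure ℝ), ρ (Icc 0 t) < ⊤ →
      (∀ n, Integrable (fun τ => (g n τ - X τ) i) (ρ.restrict (Ioc s t))) ∧
      Tendsto (fun n => ∫ τ in Ioc s t, (g n τ - X τ) i ∂ρ) atTop
        (𝓝 (∫ τ in Ioc s t, (Z τ - X τ) i ∂ρ)) := by
    intro i ρ hρ
    haveI : IsFiniteMeasure (ρ.restrict (Ioc s t)) := restrict_Ioc_finite ρ hs hρ
    have hXae : AEMeasurable X (ρ.restrict (Ioc s t)) := rcll_aemeasurable hXrc hs ρ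
    have hXiae : AEMeasurable (fun τ => X τ i) (ρ.restrict (Ioc s t)) :=
      Measurable.comp_aemeasurable (g := fun x : Euc d => x i) (f := X)
        (EuclideanSpace.proj i : Euc d →L[ℝ] ℝ).continuous.measurable hXae
    have hmeas : ∀ n, AEMeasurable (fun τ => (g n τ - X τ) i) (ρ.restrict (Ioc s t)) := by
      intro n
      exact ((((EuclideanSpace.proj i : Euc d →L[ℝ] ℝ).continuous).measurable.comp (hgmeas n)).aemeasurable).sub hXiae
    have hbdd : ∀ n, ∀ᵐ τ ∂(ρ.restrict (Ioc s t)), ‖(g n τ - X τ) i‖ ≤ CZ + CX := by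
      intro n
      filter_upwards [ae_restrict_mem measurableSet_Ioc] with τ hτ
      have hm := (mstep_facts n hlt hτ).1
      have h1 : |g n τ i| ≤ CZ :=
        le_trans (abs_coord_le _ i) (hCZ _ ⟨hs.trans hm.1.le, hm.2⟩)
      have h2 : |X τ i| ≤ CX :=
        le_trans (abs_coord_le _ i) (hCX τ ⟨hs.trans hτ.1.le, hτ.2⟩)
      have : (g n τ - X τ) i = g n τ i - X τ i := rfl
      rw [Real.norm_eq_abs, this]
      calc |g n τ i - X τ i| ≤ |g n τ i| + |X τ i| := abs_sub _ _
        _ ≤ CZ + CX := add_le_add h1 h2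
    refine ⟨fun n => Integrable.mono' (integrable_const (CZ + CX))
      (hmeas n).aestronglyMeasurable (hbdd n), ?_⟩
    apply tendsto_integral_of_dominated_convergence (bound := fun _ => CZ + CX)
      (fun n => (hmeas n).aestronglyMeasurable) (integrable_const _) hbdd
    refine (ae_restrict_iff' measurableSet_Ioc).2 (ae_of_all _ fun τ hτ => ?_)
    have hZt : Tendsto (fun n => g n τ) atTop (𝓝 (Z τ)) := rcll_tendsto_mstep hZrc hs hlt hτ
    exact ((((EuclideanSpace.proj i : Euc d →L[ℝ] ℝ).continuous.tendsto _).comp hZt)).sub tendsto_const_nhds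
  -- step C : each discretized pairing is nonnegative
  have stepC : ∀ n : ℕ, 0 ≤ M.pairing (fun τ => g n τ - X τ) s t := by
    intro n
    set N := 2 ^ n with hN
    set a : ℕ → ℝ := fun k => s + k * ((t - s) / 2 ^ n) with ha_def
    have hposh : 0 < (t - s) / 2 ^ n := hstep_pos n hlt
    have hmono : Monotone a := by
      intro k l hkl
      simp only [ha_def]
      have : (k : ℝ) ≤ (l : ℝ) := Nat.cast_le.2 hkl
      nlinarith
    have ha0 : a 0 = s := by simp [ha_def]
    have haN : a N = t := by
      simp only [ha_def, hN]
      have h2 : (2:ℝ) ^ n ≠ 0 := by positivity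
      push_cast
      field_simp
      ring
    have hanonneg : ∀ k, 0 ≤ a k := fun k => hs.trans (ha0 ▸ hmono (Nat.zero_le k))
    -- split the pairing along the partition
    have hper : ∀ (i : Fin d) (ρ : Measure ℝ), ρ (Icc 0 t) < ⊤ →
        ∫ τ in Ioc s t, (g n τ - X τ) i ∂ρ
          = ∑ k ∈ Finset.range N, ∫ τ in Ioc (a k) (a (k+1)), (g n τ - X τ) i ∂ρ := by
      intro i ρ hρ
      have hint : IntegrableOn (fun τ => (g n τ - X τ) i) (Ioc (a 0) (a N)) ρ := by
        rw [ha0, haN]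
        exact (hgen i ρ hρ).1 n
      have := integral_Ioc_partition (fun τ => (g n τ - X τ) i) ρ a hmono N hint
      rw [ha0, haN] at this
      exact this
    have hsplit : M.pairing (fun τ => g n τ - X τ) s t
        = ∑ k ∈ Finset.range N, M.pairing (fun τ => g n τ - X τ) (a k) (a (k+1)) := by
      unfold BVMeasureData.pairing
      rw [Finset.sum_comm]
      apply Finset.sum_congr rfl
      intro i _
      rw [hper i (M.pos i) (M.pos_fin i t), hper i (M.neg i) (M.neg_fin i t),
        Finset.sum_sub_distrib]
    have hpiece : ∀ k ∈ Finset.range N, 0 ≤ M.pairing (fun τ => g n τ - X τ) (a k) (a (k+1)) := by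
      intro k hk
      have hkN : k + 1 ≤ N := Nat.succ_le_of_lt (Finset.mem_range.1 hk)
      have hak1 : a (k+1) ≤ t := haN ▸ hmono hkN
      have hη := hA.normal (fun _ => Z (a (k+1))) continuous_const
        (fun u _ => hZmem (a (k+1)) (hanonneg (k+1)))
        (a k) (a (k+1)) (hanonneg k) (hmono (Nat.le_succ k))
      have heq : M.pairing (fun τ => g n τ - X τ) (a k) (a (k+1))
          = M.pairing (fun τ => (fun _ => Z (a (k+1))) τ - X τ) (a k) (a (k+1)) := by
        unfold BVMeasureData.pairing
        apply Finset.sum_congr rfl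
        intro i _
        have harg : ∀ τ ∈ Ioc (a k) (a (k+1)), (g n τ - X τ) i = (Z (a (k+1)) - X τ) i := by
          intro τ hτ
          have hτ' : τ ∈ Ioc (s + (k:ℝ) * ((t - s) / 2 ^ n)) (s + ((k:ℝ) + 1) * ((t - s) / 2 ^ n)) := by
            have e1 : a k = s + (k:ℝ) * ((t - s) / 2 ^ n) := by simp [ha_def]
            have e2 : a (k+1) = s + ((k:ℝ) + 1) * ((t - s) / 2 ^ n) := by
              simp only [ha_def]; push_cast; ring
            rw [e1, e2] at hτ; exact hτ
          have := mstep_const n hlt hτ'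
          simp only [hg, this]
          have e : s + ((k:ℝ) + 1) * ((t - s) / 2 ^ n) = a (k+1) := by
            simp only [ha_def]; push_cast; ring
          rw [e]
        congr 1 <;> exact setIntegral_congr_fun measurableSet_Ioc harg
      rw [heq]
      exact hη
    rw [hsplit]
    exact Finset.sum_nonneg hpiece
  -- step D : pass to the limit
  have stepD : Tendsto (fun n => M.pairing (fun τ => g n τ - X τ) s t) atTop
      (𝓝 (M.pairing (fun τ => Z τ - X τ) s t)) := by
    unfold BVMeasureData.pairing
    apply tendsto_finset_sum
    intro i _
    exact ((hgen i (M.pos i) (M.pos_fin i t)).2).sub ((hgen i (M.neg i) (M.neg_fin i t)).2)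
  exact ge_of_tendsto' stepD stepC

/-- **Lemma 4.1.3.** The Skorohod equation `X = w + φ` for a nonempty convex open `D ⊆ ℝ^d`
has at most one solution: any two solutions agree (with the same reflection term) on `[0,∞)`. -/
theorem skorohod_unique {d : ℕ} (D : Set (Euc d)) (hne : D.Nonempty)
    (hconv : Convex ℝ D) (hopen : IsOpen D)
    (w : ℝ → Euc d)
    (hw_rc : RightContinuousOnNonneg w) (hw_ll : HasLeftLimitsOnPos w)
    (hw0 : w 0 ∈ closure D)
    (X X' φ φ' : ℝ → Euc d)
    (M : BVMeasureData d φ) (M' : BVMeasureData d φ')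
    (hsol : IsSkorohodSolution D w X φ M) (hsol' : IsSkorohodSolution D w X' φ' M') :
    ∀ t : ℝ, 0 ≤ t → X t = X' t ∧ φ t = φ' t := by
  intro t ht
  suffices hX : X t = X' t by
    refine ⟨hX, ?_⟩
    have e1 := hsol.eqn t ht
    have e2 := hsol'.eqn t ht
    have : w t + φ t = w t + φ' t := by rw [← e1, ← e2, hX]
    exact add_left_cancel this
  rcases eq_or_lt_of_le ht with rfl | htpos
  · rw [hsol.eqn 0 le_rfl, hsol'.eqn 0 le_rfl, hsol.assoc.init, hsol'.assoc.init]
  -- t > 0 : coordinatewise energy estimate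
  have key : ∀ i : Fin d, (X t i - X' t i)^2 ≤ 2 *
      (((∫ τ in Ioc 0 t, (X τ - X' τ) i ∂(M.pos i))
          - ∫ τ in Ioc 0 t, (X τ - X' τ) i ∂(M.neg i))
        - ((∫ τ in Ioc 0 t, (X τ - X' τ) i ∂(M'.pos i))
          - ∫ τ in Ioc 0 t, (X τ - X' τ) i ∂(M'.neg i))) := by
    intro i
    set p : Measure ℝ := (M.pos i + M'.neg i).restrict (Ioc 0 t) with hp
    set q : Measure ℝ := (M.neg i + M'.pos i).restrict (Ioc 0 t) with hq
    haveI hpf : IsFiniteMeasure p := by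
      refine restrict_Ioc_finite _ le_rfl ?_
      rw [Measure.add_apply]
      exact ENNReal.add_lt_top.2 ⟨M.pos_fin i t, M'.neg_fin i t⟩
    haveI hqf : IsFiniteMeasure q := by
      refine restrict_Ioc_finite _ le_rfl ?_
      rw [Measure.add_apply]
      exact ENNReal.add_lt_top.2 ⟨M.neg_fin i t, M'.pos_fin i t⟩
    have hne_top : ∀ (ρ : Measure ℝ), ρ (Icc 0 t) < ⊤ → ∀ v ≤ t, ρ (Ioc 0 v) ≠ ⊤ := by
      intro ρ hρ v hv
      refine ((measure_mono fun x hx => ?_).trans_lt hρ).ne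
      rcases mem_Ioc.1 hx with ⟨h1, h2⟩
      exact mem_Icc.2 ⟨h1.le, h2.trans hv⟩
    -- the combination of increments
    have hcomp : ∀ v, 0 < v → v ≤ t →
        ((M.pos i + M'.neg i) (Ioc 0 v)).toReal - ((M.neg i + M'.pos i) (Ioc 0 v)).toReal
          = X v i - X' v i := by
      intro v hv0 hvt
      rw [Measure.add_apply, Measure.add_apply,
        ENNReal.toReal_add (hne_top _ (M.pos_fin i t) v hvt) (hne_top _ (M'.neg_fin i t) v hvt),
        ENNReal.toReal_add (hne_top _ (M.neg_fin i t) v hvt) (hne_top _ (M'.pos_fin i t) v hvt)]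
      have i1 := M.increments i 0 v le_rfl hv0.le
      have i2 := M'.increments i 0 v le_rfl hv0.le
      have h01 : φ 0 i = 0 := by rw [hsol.assoc.init]; rfl
      have h02 : φ' 0 i = 0 := by rw [hsol'.assoc.init]; rfl
      have hx1 : X v i = w v i + φ v i := by rw [hsol.eqn v hv0.le]; rfl
      have hx2 : X' v i = w v i + φ' v i := by rw [hsol'.eqn v hv0.le]; rfl
      rw [h01] at i1
      rw [h02] at i2
      linarith
    -- identification of the distribution function on (0,t]
    have hval : ∀ v ∈ Ioc (0:ℝ) t,
        (p (Iic v)).toReal - (q (Iic v)).toReal = (X v - X' v) i := by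
      intro v hv
      have hIc : Iic v ∩ Ioc 0 t = Ioc 0 v := by
        ext x
        simp only [mem_inter_iff, mem_Iic, mem_Ioc]
        exact ⟨fun ⟨h1, h2, _⟩ => ⟨h2, h1⟩, fun ⟨h1, h2⟩ => ⟨h2, h1, h2.trans hv.2⟩⟩
      rw [hp, hq, Measure.restrict_apply measurableSet_Iic,
        Measure.restrict_apply measurableSet_Iic, hIc]
      exact hcomp v hv.1 hv.2
    have huniv : (p univ).toReal - (q univ).toReal = X t i - X' t i := by
      rw [hp, hq, Measure.restrict_apply_univ, Measure.restrict_apply_univ]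
      exact hcomp t htpos le_rfl
    -- apply the energy inequality
    have hen := energy_ineq p q
    rw [huniv] at hen
    -- identify the integrals
    have hFm : Measurable fun v => (p (Iic v)).toReal - (q (Iic v)).toReal :=
      (meas_Iic_fun p).ennreal_toReal.sub (meas_Iic_fun q).ennreal_toReal
    have hFb : ∀ v, |(p (Iic v)).toReal - (q (Iic v)).toReal|
        ≤ (p univ).toReal + (q univ).toReal := by
      intro v
      have h1 : (p (Iic v)).toReal ≤ (p univ).toReal :=
        ENNReal.toReal_mono (measure_ne_top _ _) (measure_mono (subset_univ _))
      have h2 : (q (Iic v)).toReal ≤ (q univ).toReal :=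
        ENNReal.toReal_mono (measure_ne_top _ _) (measure_mono (subset_univ _))
      have h3 : (0:ℝ) ≤ (p (Iic v)).toReal := ENNReal.toReal_nonneg
      have h4 : (0:ℝ) ≤ (q (Iic v)).toReal := ENNReal.toReal_nonneg
      rw [abs_le]
      constructor <;> nlinarith
    have hsplitint : ∀ (μ1 μ2 : Measure ℝ), μ1 (Icc 0 t) < ⊤ → μ2 (Icc 0 t) < ⊤ →
        ∫ v, ((p (Iic v)).toReal - (q (Iic v)).toReal) ∂((μ1 + μ2).restrict (Ioc 0 t))
          = (∫ τ in Ioc 0 t, (X τ - X' τ) i ∂μ1) + ∫ τ in Ioc 0 t, (X τ - X' τ) i ∂μ2 := by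
      intro μ1 μ2 h1 h2
      haveI := restrict_Ioc_finite μ1 (le_refl (0:ℝ)) h1
      haveI := restrict_Ioc_finite μ2 (le_refl (0:ℝ)) h2
      rw [Measure.restrict_add, integral_add_measure
        (integrable_of_bdd_meas _ hFm hFb) (integrable_of_bdd_meas _ hFm hFb)]
      congr 1 <;> exact setIntegral_congr_fun measurableSet_Ioc hval
    rw [hp, hq, hsplitint (M.pos i) (M'.neg i) (M.pos_fin i t) (M'.neg_fin i t),
      hsplitint (M.neg i) (M'.pos i) (M.neg_fin i t) (M'.pos_fin i t)] at hen
    linarith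
  -- sum over coordinates and compare with the pairings
  have hsum : ∑ i : Fin d, (X t i - X' t i)^2 ≤ 2 *
      (M.pairing (fun τ => X τ - X' τ) 0 t - M'.pairing (fun τ => X τ - X' τ) 0 t) := by
    calc ∑ i : Fin d, (X t i - X' t i)^2 ≤ ∑ i : Fin d, 2 *
        (((∫ τ in Ioc 0 t, (X τ - X' τ) i ∂(M.pos i))
            - ∫ τ in Ioc 0 t, (X τ - X' τ) i ∂(M.neg i))
          - ((∫ τ in Ioc 0 t, (X τ - X' τ) i ∂(M'.pos i))
            - ∫ τ in Ioc 0 t, (X τ - X' τ) i ∂(M'.neg i))) :=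
        Finset.sum_le_sum (fun i _ => key i)
      _ = _ := by
        unfold BVMeasureData.pairing
        rw [← Finset.mul_sum, ← Finset.sum_sub_distrib]
  -- sign information from the variational inequality
  have hApos : 0 ≤ M.pairing (fun τ => X' τ - X τ) 0 t :=
    pairing_nonneg hsol.assoc hsol.rightCont hsol.leftLim hsol'.rightCont hsol'.leftLim
      hsol'.mem le_rfl ht
  have hBpos : 0 ≤ M'.pairing (fun τ => X τ - X' τ) 0 t :=
    pairing_nonneg hsol'.assoc hsol'.rightCont hsol'.leftLim hsol.rightCont hsol.leftLim
      hsol.mem le_rfl ht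
  have hAneg : M.pairing (fun τ => X τ - X' τ) 0 t
      = - M.pairing (fun τ => X' τ - X τ) 0 t := by
    unfold BVMeasureData.pairing
    rw [← Finset.sum_neg_distrib]
    apply Finset.sum_congr rfl
    intro i _
    have hflip : ∀ (ρ : Measure ℝ), ∫ τ in Ioc (0:ℝ) t, (X τ - X' τ) i ∂ρ
        = - ∫ τ in Ioc (0:ℝ) t, (X' τ - X τ) i ∂ρ := by
      intro ρ
      rw [← integral_neg]
      apply integral_congr_ae (ae_of_all _ fun τ => ?_)
      show X τ i - X' τ i = -(X' τ i - X τ i)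
      ring
    rw [hflip (M.pos i), hflip (M.neg i)]
    ring
  have hz : ∑ i : Fin d, (X t i - X' t i)^2 = 0 := by
    have hnn : 0 ≤ ∑ i : Fin d, (X t i - X' t i)^2 :=
      Finset.sum_nonneg fun i _ => sq_nonneg _
    have : M.pairing (fun τ => X τ - X' τ) 0 t ≤ 0 := by rw [hAneg]; linarith
    linarith
  have hall := (Finset.sum_eq_zero_iff_of_nonneg
    (fun i _ => sq_nonneg (X t i - X' t i))).1 hz
  ext i
  have := hall i (Finset.mem_univ i)
  have := sq_eq_zero_iff.1 this
  linarith


end
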